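/- Suppose misalignment holds: L − (η₁/η₂)(L + ℓ₁) ≤ τ < L − (η₁/η₂)L (so δ*_DC = L, δ*_SW = τ). Then the welfare loss from decentralized behavior is C_SW(L) − C_SW(τ) = η₁(ℓ₁ + L) − η₂(L − τ) ≥ 0, and it is strictly positive when the first inequality is strict. -/

import Mathlib

theorem stmt_10 (η₁ η₂ L τ ℓ₁ ℓ₂ : ℝ) (hη₁ : 0 < η₁) (hη₂ : 0 < η₂)
    (hℓ₁ : 0 ≤ ℓ₁) (hL : 0 < L) (hτ0 : 0 ≤ τ) (hτL : τ < L)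
    (g : ℝ → ℝ)
    (hg : ∀ δ, g δ = if δ ≤ τ then η₂ * ℓ₂ - η₂ * δ
        else η₁ * ℓ₁ + η₂ * ℓ₂ + (η₁ - η₂) * δ)
    (hmis₁ : L - (η₁ / η₂) * (L + ℓ₁) ≤ τ)
    (hmis₂ : τ < L - (η₁ / η₂) * L) :
    g L - g τ = η₁ * (ℓ₁ + L) - η₂ * (L - τ) ∧
    0 ≤ g L - g τ ∧
    (L - (η₁ / η₂) * (L + ℓ₁) < τ → 0 < g L - g τ) := by
  have hgl : g L = η₁ * ℓ₁ + η₂ * ℓ₂ + (η₁ - η₂) * L := by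
    rw [hg]; rw [if_neg (by linarith)]
  have hgτ : g τ = η₂ * ℓ₂ - η₂ * τ := by rw [hg]; rw [if_pos le_rfl]
  have key : g L - g τ = η₁ * (ℓ₁ + L) - η₂ * (L - τ) := by
    rw [hgl, hgτ]; ring
  have h1 : η₂ * (L - (η₁ / η₂) * (L + ℓ₁)) ≤ η₂ * τ :=
    mul_le_mul_of_nonneg_left hmis₁ hη₂.le
  have hfield : η₂ * (L - (η₁ / η₂) * (L + ℓ₁)) = η₂ * L - η₁ * (L + ℓ₁) := by
    field_simp
  refine ⟨key, ?_, ?_⟩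
  · rw [key]; nlinarith
  · intro hlt
    have h2 : η₂ * (L - (η₁ / η₂) * (L + ℓ₁)) < η₂ * τ :=
      mul_lt_mul_of_pos_left hlt hη₂
    rw [key]; nlinarith
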